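/- arXiv:2412.09987 — 2 statements merged into one kernel-verified Lean document; each statement's English description precedes it below -/
import Mathlib

section
/- The symbol A(ξ)(v) = (ξ₁v₁, ξ₂v₁+ξ₁v₂, ξ₂v₂) of the symmetrized gradient on ℝ² is canceling: the intersection over all nonzero ξ ∈ ℝ² of the images of A(ξ) : ℝ² → ℝ³ is {0}. -/
noncomputable abbrev E2 := EuclideanSpace ℝ (Fin 2)

/-- The symbol `A(ξ)(v) = (ξ₁v₁, ξ₂v₁ + ξ₀v₁, ξ₂v₂)` is canceling:
`⋂_{ξ ≠ 0} Image[A(ξ)] = {0}` in `ℝ³`. -/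
theorem stmt_6 (w : Fin 3 → ℝ)
    (h : ∀ ξ : E2, ξ ≠ 0 → ∃ v : E2,
      w = ![ξ 0 * v 0, ξ 1 * v 0 + ξ 0 * v 1, ξ 1 * v 1]) :
    w = 0 := by
  have hne : ∀ (a b : ℝ), a ≠ 0 → (show E2 from WithLp.toLp 2 ![a, b]) ≠ 0 := by
    intro a b ha hz
    exact ha (by simpa using congrArg (· 0) hz)
  obtain ⟨v1, hv1⟩ := h (show E2 from WithLp.toLp 2 ![1, 0]) (hne 1 0 one_ne_zero)
  obtain ⟨v2, hv2⟩ := h (show E2 from WithLp.toLp 2 ![0, 1]) (by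
    intro hz
    have := congrArg (· 1) hz
    simp [Matrix.cons_val_one, Matrix.head_cons] at this)
  obtain ⟨v3, hv3⟩ := h (show E2 from WithLp.toLp 2 ![1, 1]) (hne 1 1 one_ne_zero)
  have h0 : w 0 = 0 := by have := congrFun hv2 0; simpa using this
  have h2 : w 2 = 0 := by have := congrFun hv1 2; simpa using this
  have h30 : w 0 = v3 0 := by have := congrFun hv3 0; simpa using this
  have h32 : w 2 = v3 1 := by have := congrFun hv3 2; simpa using this
  have h1 : w 1 = 0 := by
    have := congrFun hv3 1
    simp only [Matrix.cons_val_one, Matrix.head_cons, one_mul] at this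
    rw [this, ← h30, ← h32, h0, h2]; simp
  funext i
  fin_cases i <;> simp [h0, h1, h2]
end

section
/- For the gradient on ℝ³ with Green's function G(x) = (∂₁, ∂₂, ∂₃)(1/(4π|x|)), cocanceling operator given by the curl, and K(y) the 3×3 antisymmetric matrix with K(y)v = y × v: the identity ∂_{x₁}G(x) K_{e₂} = ∂_{x₂}G(x) K_{e₁} fails; explicitly, the row vectors obtained by applying (∂₁∂₃, 0, −∂₁²) and (0, −∂₂∂₃, ∂₂²) to |x|^{−1} are not equal as functions on ℝ³∖{0}. -/
noncomputable abbrev E3 := EuclideanSpace ℝ (Fin 3)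

noncomputable def pd (i : Fin 3) (f : E3 → ℝ) (x : E3) : ℝ :=
  fderiv ℝ f x (EuclideanSpace.single i 1)

/-- `|x|⁻¹` on `ℝ³`. -/
noncomputable def invNorm (x : E3) : ℝ := ‖x‖⁻¹

open Real

lemma invNorm_eq : invNorm = fun y : E3 => ((‖y‖ ^ 2 : ℝ)) ^ (-(1/2) : ℝ) := by
  funext y
  by_cases hy : y = 0
  · simp [invNorm, hy, Real.zero_rpow (by norm_num : -(1/2 : ℝ) ≠ 0)]
  · have h : (0:ℝ) < ‖y‖ := norm_pos_iff.2 hy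
    rw [invNorm, ← Real.rpow_natCast ‖y‖ 2, ← Real.rpow_mul (norm_nonneg y)]
    norm_num
    rw [Real.rpow_neg_one]

lemma normSq_hasFDerivAt (x : E3) :
    HasFDerivAt (fun y : E3 => ‖y‖ ^ 2) (2 • (innerSL ℝ x)) x := by
  simpa using (hasFDerivAt_id x).norm_sq

lemma hasFDerivAt_invNorm (x : E3) (hx : x ≠ 0) :
    HasFDerivAt invNorm ((-(‖x‖ ^ 2 : ℝ) ^ (-(3/2) : ℝ)) • innerSL ℝ x) x := by
  have hns : (‖x‖ ^ 2 : ℝ) ≠ 0 := pow_ne_zero 2 (norm_ne_zero_iff.2 hx)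
  have h3 : HasDerivAt (fun t : ℝ => t ^ (-(1/2) : ℝ))
      ((-(1/2)) * (‖x‖ ^ 2 : ℝ) ^ (-(1/2) - 1 : ℝ)) (‖x‖ ^ 2) :=
    Real.hasDerivAt_rpow_const (Or.inl hns)
  have h := h3.comp_hasFDerivAt x (normSq_hasFDerivAt x)
  rw [invNorm_eq]
  refine h.congr_fderiv ?_
  ext y
  simp only [ContinuousLinearMap.smul_apply, ContinuousLinearMap.smul_apply, smul_eq_mul]
  have : (-(1/2) - 1 : ℝ) = -(3/2) := by norm_num
  rw [this]
  ring

/-- first derivative formula -/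
lemma pd_invNorm (i : Fin 3) (x : E3) (hx : x ≠ 0) :
    pd i invNorm x = -(‖x‖ ^ 2 : ℝ) ^ (-(3/2) : ℝ) * x i := by
  rw [pd, (hasFDerivAt_invNorm x hx).fderiv]
  simp [EuclideanSpace.inner_single_right, real_inner_comm]

lemma hasFDerivAt_F (i : Fin 3) (x : E3) (hx : x ≠ 0) :
    HasFDerivAt (fun y : E3 => -(‖y‖ ^ 2 : ℝ) ^ (-(3/2) : ℝ) * y i)
      ((-(‖x‖ ^ 2 : ℝ) ^ (-(3/2) : ℝ)) • (EuclideanSpace.proj i : E3 →L[ℝ] ℝ)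
        + (x i * (3 * (‖x‖ ^ 2 : ℝ) ^ (-(5/2) : ℝ))) • innerSL ℝ x) x := by
  have hns : (‖x‖ ^ 2 : ℝ) ≠ 0 := pow_ne_zero 2 (norm_ne_zero_iff.2 hx)
  have h3 : HasDerivAt (fun t : ℝ => t ^ (-(3/2) : ℝ))
      ((-(3/2)) * (‖x‖ ^ 2 : ℝ) ^ (-(3/2) - 1 : ℝ)) (‖x‖ ^ 2) :=
    Real.hasDerivAt_rpow_const (Or.inl hns)
  have hg : HasFDerivAt (fun y : E3 => -(‖y‖ ^ 2 : ℝ) ^ (-(3/2) : ℝ))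
      (-(((-(3/2)) * (‖x‖ ^ 2 : ℝ) ^ (-(3/2) - 1 : ℝ)) • (2 • (innerSL ℝ x)))) x :=
    by have := (h3.comp_hasFDerivAt x (normSq_hasFDerivAt x)).neg; exact this
  have hh : HasFDerivAt (fun y : E3 => y i) (EuclideanSpace.proj i : E3 →L[ℝ] ℝ) x :=
    (EuclideanSpace.proj i : E3 →L[ℝ] ℝ).hasFDerivAt
  have := hg.mul hh
  refine this.congr_fderiv ?_
  ext y
  simp only [ContinuousLinearMap.add_apply, ContinuousLinearMap.smul_apply, smul_eq_mul,
    ContinuousLinearMap.neg_apply]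
  have : (-(3/2) - 1 : ℝ) = -(5/2) := by norm_num
  rw [this]
  ring

/-- second derivative formula -/
lemma pd_pd_invNorm (i j : Fin 3) (x : E3) (hx : x ≠ 0) :
    pd j (pd i invNorm) x =
      -(‖x‖ ^ 2 : ℝ) ^ (-(3/2) : ℝ) * (if j = i then 1 else 0)
        + x i * (3 * (‖x‖ ^ 2 : ℝ) ^ (-(5/2) : ℝ)) * x j := by
  have heq : pd i invNorm =ᶠ[nhds x] fun y : E3 => -(‖y‖ ^ 2 : ℝ) ^ (-(3/2) : ℝ) * y i := by
    filter_upwards [isOpen_ne.mem_nhds (by simpa using hx : x ≠ (0:E3))] with y hy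
    exact pd_invNorm i y hy
  rw [pd, heq.fderiv_eq, (hasFDerivAt_F i x hx).fderiv]
  simp [EuclideanSpace.inner_single_right, EuclideanSpace.single_apply, eq_comm, mul_assoc]
  split_ifs <;> simp

/-- The identity `∂_{x₁}G(x) K_{e₂} = ∂_{x₂}G(x) K_{e₁}` fails for the gradient on `ℝ³`:
the row vectors `(∂₁∂₃, 0, −∂₁²)|x|⁻¹` and `(0, −∂₂∂₃, ∂₂²)|x|⁻¹` differ at some
`x ∈ ℝ³ ∖ {0}`. -/
theorem stmt_17 :
    ∃ x : E3, x ≠ 0 ∧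
      ![pd 0 (pd 2 invNorm) x, 0, -(pd 0 (pd 0 invNorm) x)] ≠
        ![(0 : ℝ), -(pd 1 (pd 2 invNorm) x), pd 1 (pd 1 invNorm) x] := by
  refine ⟨EuclideanSpace.single 0 1, ?_, ?_⟩
  · intro h
    have : (EuclideanSpace.single (0 : Fin 3) (1:ℝ)) 0 = 0 := by rw [h]; rfl
    simp at this
  · have hx : (EuclideanSpace.single (0 : Fin 3) (1:ℝ)) ≠ 0 := by
      intro h
      have : (EuclideanSpace.single (0 : Fin 3) (1:ℝ)) 0 = 0 := by rw [h]; rfl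
      simp at this
    have hnorm : ‖EuclideanSpace.single (0 : Fin 3) (1:ℝ)‖ = 1 := by
      simp [EuclideanSpace.norm_single]
    intro h
    have h2 := congrFun h 2
    rw [pd_pd_invNorm 0 0 _ hx, pd_pd_invNorm 1 1 _ hx] at h2
    simp [hnorm, EuclideanSpace.single_apply, Real.one_rpow] at h2
    norm_num at h2
end
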